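/- Additivity of the Alexander grading under connected sum: for characteristic vectors K₁ for M₁ and K₂ for M₂ and subsets E₁ ⊆ V₁, E₂ ⊆ V₂, the Alexander grading A_# on the disjoint union graph induced by the merged distinguished vertex satisfies A_#([K₁⊕K₂, E₁ ∪ E₂]) = A₁([K₁,E₁]) + A₂([K₂,E₂]). -/

import Mathlib

open Finset

variable {V : Type*}

/-- `M` is negative definite: `xᵀMx < 0` for every nonzero `x ∈ ℝ^V`. -/
def NegDef [Fintype V] (M : V → V → ℤ) : Prop :=
  ∀ x : V → ℝ, x ≠ 0 → (∑ v, ∑ w, (M v w : ℝ) * x v * x w) < 0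

/-- `K` is a characteristic vector for `M`: `K(v) ≡ v·v (mod 2)` for all `v`. -/
def IsChar (M : V → V → ℤ) (K : V → ℤ) : Prop :=
  ∀ v, Int.ModEq 2 (K v) (M v v)

/-- `f(K, I) = (1/2)(Σ_{v∈I} K(v) + (Σ_{v∈I} v)·(Σ_{v∈I} v))` (an exact integer division
for characteristic `K`). -/
def latF (M : V → V → ℤ) (K : V → ℤ) (I : Finset V) : ℤ :=
  ((∑ v ∈ I, K v) + ∑ v ∈ I, ∑ w ∈ I, M v w) / 2

/-- `g(K, E) = min_{I ⊆ E} f(K, I)`. -/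
def latG (M : V → V → ℤ) (K : V → ℤ) (E : Finset V) : ℤ :=
  (E.powerset.image (latF M K)).min'
    ⟨_, Finset.mem_image_of_mem _ (Finset.empty_mem_powerset E)⟩

/-- `B_v(K, E) = min { f(K, I) : v ∈ I ⊆ E }` (for `v ∈ E`). -/
def latB [DecidableEq V] (M : V → V → ℤ) (K : V → ℤ) (E : Finset V) (v : V) : ℤ :=
  ((E.erase v).powerset.image (fun I => latF M K (insert v I))).min'
    ⟨_, Finset.mem_image_of_mem _ (Finset.empty_mem_powerset _)⟩

/-- `a_v(K,E) = A_v(K,E) - g(K,E) = g(K, E∖{v}) - g(K,E)`. -/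
def lata [DecidableEq V] (M : V → V → ℤ) (K : V → ℤ) (E : Finset V) (v : V) : ℤ :=
  latG M K (E.erase v) - latG M K E

/-- `b_v(K,E) = B_v(K,E) - g(K,E)`. -/
def latb [DecidableEq V] (M : V → V → ℤ) (K : V → ℤ) (E : Finset V) (v : V) : ℤ :=
  latB M K E v - latG M K E

/-- The intersection matrix of the graph obtained by attaching the framing `m₀` to the extra
vertex `v₀ = none`, joined to `G` by the edges recorded by `e`. -/
def Mext (M : V → V → ℤ) (e : V → ℤ) (m₀ : ℤ) : Option V → Option V → ℤ := fun x y =>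
  match x, y with
  | some v, some w => M v w
  | some v, none => e v
  | none, some w => e w
  | none, none => m₀

/-- The coefficients of `Σ = v₀ + Σ_{v∈V} a_v·v`: `a = −M⁻¹e`, the unique solution of
`w·Σ = 0` for all `w ∈ V`. -/
noncomputable def sigmaC [Fintype V] [DecidableEq V] (M : V → V → ℤ) (e : V → ℤ) : V → ℚ :=
  fun v => -∑ u, ((Matrix.of fun a b => (M a b : ℚ))⁻¹ v u) * e u

/-- The rational homology class `Σ = v₀ + Σ_{v∈V} a_v·v` (coordinates). -/
noncomputable def sigmaV [Fintype V] [DecidableEq V] (M : V → V → ℤ) (e : V → ℤ) :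
    Option V → ℚ
  | none => 1
  | some v => sigmaC M e v

/-- The unique characteristic extension `L_{[K,E]}` of `K` over `v₀` (for the framing `m₀`)
with `a_{v₀}(L, E∪{v₀}) = b_{v₀}(L, E∪{v₀}) = 0`:
`L(v₀) = −m₀ + 2g(K,E) − 2g(K+2v₀*,E)`. -/
def LextV [DecidableEq V] (M : V → V → ℤ) (e : V → ℤ) (m₀ : ℤ) (K : V → ℤ) (E : Finset V) :
    Option V → ℤ
  | some v => K v
  | none => -m₀ + 2 * latG M K E - 2 * latG M (fun w => K w + 2 * e w) E

/-- The Alexander grading `A([K,E]) = (1/2)(L_{[K,E]}(Σ) + Σ·Σ)`, computed with the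
framing `m₀` on `v₀`. -/
noncomputable def AlexAt [Fintype V] [DecidableEq V] (M : V → V → ℤ) (e : V → ℤ) (m₀ : ℤ)
    (K : V → ℤ) (E : Finset V) : ℚ :=
  (1 / 2) * ((∑ x : Option V, (LextV M e m₀ K E x : ℚ) * sigmaV M e x)
    + ∑ x : Option V, ∑ y : Option V, (Mext M e m₀ x y : ℚ) * sigmaV M e x * sigmaV M e y)

/-- The Alexander grading `A([K,E])` (independent of the framing; computed with framing `0`). -/
noncomputable def Alex [Fintype V] [DecidableEq V] (M : V → V → ℤ) (e : V → ℤ)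
    (K : V → ℤ) (E : Finset V) : ℚ :=
  AlexAt M e 0 K E

/-- The block-diagonal intersection matrix of the disjoint union of two plumbing graphs. -/
def Msum {V₁ V₂ : Type*} (M₁ : V₁ → V₁ → ℤ) (M₂ : V₂ → V₂ → ℤ) :
    V₁ ⊕ V₂ → V₁ ⊕ V₂ → ℤ := fun x y =>
  match x, y with
  | Sum.inl v, Sum.inl w => M₁ v w
  | Sum.inr v, Sum.inr w => M₂ v w
  | _, _ => 0

section myaux

lemma num_even [Fintype V] [DecidableEq V] (M : V → V → ℤ) (hsym : ∀ v w, M v w = M w v)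
    (K : V → ℤ) (hK : IsChar M K) (I : Finset V) :
    2 ∣ ((∑ v ∈ I, K v) + ∑ v ∈ I, ∑ w ∈ I, M v w) := by
  induction I using Finset.induction_on with
  | empty => simp
  | @insert a s ha ih =>
      have hch : (2:ℤ) ∣ M a a - K a := (hK a).dvd
      have hswap : ∑ w ∈ s, M w a = ∑ w ∈ s, M a w :=
        Finset.sum_congr rfl fun w _ => hsym w a
      rw [Finset.sum_insert ha, Finset.sum_insert ha, Finset.sum_insert ha]
      have hrow : ∀ v ∈ s, ∑ w ∈ insert a s, M v w = M v a + ∑ w ∈ s, M v w :=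
        fun v _ => Finset.sum_insert ha
      rw [Finset.sum_congr rfl hrow, Finset.sum_add_distrib, hswap]
      obtain ⟨c, hc⟩ := ih
      obtain ⟨d, hd⟩ := hch
      omega

lemma latF_disjSum {V₁ V₂ : Type*} [Fintype V₁] [DecidableEq V₁] [Fintype V₂] [DecidableEq V₂]
    (M₁ : V₁ → V₁ → ℤ) (M₂ : V₂ → V₂ → ℤ)
    (hsym₁ : ∀ v w, M₁ v w = M₁ w v) (hsym₂ : ∀ v w, M₂ v w = M₂ w v)
    (K₁ : V₁ → ℤ) (hK₁ : IsChar M₁ K₁) (K₂ : V₂ → ℤ) (hK₂ : IsChar M₂ K₂)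
    (I₁ : Finset V₁) (I₂ : Finset V₂) :
    latF (Msum M₁ M₂) (Sum.elim K₁ K₂) (I₁.disjSum I₂) = latF M₁ K₁ I₁ + latF M₂ K₂ I₂ := by
  have h1 := num_even M₁ hsym₁ K₁ hK₁ I₁
  have h2 := num_even M₂ hsym₂ K₂ hK₂ I₂
  unfold latF
  rw [Finset.sum_disjSum]
  have hq : ∑ v ∈ I₁.disjSum I₂, ∑ w ∈ I₁.disjSum I₂, Msum M₁ M₂ v w
      = (∑ v ∈ I₁, ∑ w ∈ I₁, M₁ v w) + ∑ v ∈ I₂, ∑ w ∈ I₂, M₂ v w := by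
    rw [Finset.sum_disjSum]
    simp [Finset.sum_disjSum, Msum]
  rw [hq]
  simp only [Sum.elim_inl, Sum.elim_inr]
  obtain ⟨c, hc⟩ := h1
  obtain ⟨d, hd⟩ := h2
  omega

lemma latG_le (M : V → V → ℤ) (K : V → ℤ) {E I : Finset V} (h : I ⊆ E) :
    latG M K E ≤ latF M K I :=
  Finset.min'_le _ _ (Finset.mem_image_of_mem _ (Finset.mem_powerset.2 h))

lemma latG_exists (M : V → V → ℤ) (K : V → ℤ) (E : Finset V) :
    ∃ I ⊆ E, latF M K I = latG M K E := by
  have := Finset.min'_mem (E.powerset.image (latF M K))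
    ⟨_, Finset.mem_image_of_mem _ (Finset.empty_mem_powerset E)⟩
  obtain ⟨I, hI, hval⟩ := Finset.mem_image.1 this
  exact ⟨I, Finset.mem_powerset.1 hI, hval⟩

lemma latG_disjSum {V₁ V₂ : Type*} [Fintype V₁] [DecidableEq V₁] [Fintype V₂] [DecidableEq V₂]
    (M₁ : V₁ → V₁ → ℤ) (M₂ : V₂ → V₂ → ℤ)
    (hsym₁ : ∀ v w, M₁ v w = M₁ w v) (hsym₂ : ∀ v w, M₂ v w = M₂ w v)
    (K₁ : V₁ → ℤ) (hK₁ : IsChar M₁ K₁) (K₂ : V₂ → ℤ) (hK₂ : IsChar M₂ K₂)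
    (E₁ : Finset V₁) (E₂ : Finset V₂) :
    latG (Msum M₁ M₂) (Sum.elim K₁ K₂) (E₁.disjSum E₂) = latG M₁ K₁ E₁ + latG M₂ K₂ E₂ := by
  apply le_antisymm
  · obtain ⟨I₁, hI₁, hf₁⟩ := latG_exists M₁ K₁ E₁
    obtain ⟨I₂, hI₂, hf₂⟩ := latG_exists M₂ K₂ E₂
    have hsub : I₁.disjSum I₂ ⊆ E₁.disjSum E₂ := by
      intro x hx
      cases x with
      | inl a => simp only [Finset.inl_mem_disjSum] at hx ⊢; exact hI₁ hx
      | inr b => simp only [Finset.inr_mem_disjSum] at hx ⊢; exact hI₂ hx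
    calc latG (Msum M₁ M₂) (Sum.elim K₁ K₂) (E₁.disjSum E₂)
        ≤ latF (Msum M₁ M₂) (Sum.elim K₁ K₂) (I₁.disjSum I₂) := latG_le _ _ hsub
      _ = latF M₁ K₁ I₁ + latF M₂ K₂ I₂ :=
          latF_disjSum M₁ M₂ hsym₁ hsym₂ K₁ hK₁ K₂ hK₂ I₁ I₂
      _ = _ := by rw [hf₁, hf₂]
  · obtain ⟨I, hI, hf⟩ := latG_exists (Msum M₁ M₂) (Sum.elim K₁ K₂) (E₁.disjSum E₂)
    rw [← hf, ← Finset.toLeft_disjSum_toRight (u := I),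
      latF_disjSum M₁ M₂ hsym₁ hsym₂ K₁ hK₁ K₂ hK₂]
    have hL : I.toLeft ⊆ E₁ := by
      intro x hx
      have := hI (Finset.mem_toLeft.1 hx)
      simpa using this
    have hR : I.toRight ⊆ E₂ := by
      intro x hx
      have := hI (Finset.mem_toRight.1 hx)
      simpa using this
    exact add_le_add (latG_le _ _ hL) (latG_le _ _ hR)

end myaux


section myaux2

lemma negdef_isUnit_det [Fintype V] [DecidableEq V] (M : V → V → ℤ) (h : NegDef M) :
    IsUnit (Matrix.of fun a b => (M a b : ℚ)).det := by
  rw [isUnit_iff_ne_zero]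
  intro hdet
  obtain ⟨x, hx0, hx⟩ := Matrix.exists_mulVec_eq_zero_iff.2 hdet
  set y : V → ℝ := fun v => ((x v : ℚ) : ℝ) with hy
  have hy0 : y ≠ 0 := by
    intro h0
    apply hx0
    funext v
    have := congrFun h0 v
    simpa [hy] using this
  have hrow : ∀ v, ∑ w, (M v w : ℚ) * x w = 0 := by
    intro v
    have := congrFun hx v
    simpa [Matrix.mulVec, dotProduct] using this
  have hzero : (∑ v, ∑ w, (M v w : ℝ) * y v * y w) = 0 := by
    have : ∀ v, ∑ w, (M v w : ℝ) * y v * y w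
        = y v * ((∑ w, (M v w : ℚ) * x w : ℚ) : ℝ) := by
      intro v
      push_cast
      rw [Finset.mul_sum]
      exact Finset.sum_congr rfl fun w _ => by ring
    rw [Finset.sum_congr rfl fun v _ => this v]
    simp [hrow]
  have := h y hy0
  linarith

lemma Msum_block {V₁ V₂ : Type*} (M₁ : V₁ → V₁ → ℤ) (M₂ : V₂ → V₂ → ℤ) :
    (Matrix.of fun a b => ((Msum M₁ M₂) a b : ℚ))
      = Matrix.fromBlocks (Matrix.of fun a b => (M₁ a b : ℚ)) 0 0
          (Matrix.of fun a b => (M₂ a b : ℚ)) := by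
  ext i j
  cases i <;> cases j <;> simp [Msum, Matrix.fromBlocks]

lemma block_inv {V₁ V₂ : Type*} [Fintype V₁] [DecidableEq V₁] [Fintype V₂] [DecidableEq V₂]
    (A : Matrix V₁ V₁ ℚ) (B : Matrix V₂ V₂ ℚ) (hA : IsUnit A.det) (hB : IsUnit B.det) :
    (Matrix.fromBlocks A 0 0 B)⁻¹ = Matrix.fromBlocks A⁻¹ 0 0 B⁻¹ :=
  Matrix.inv_eq_right_inv (by
    rw [Matrix.fromBlocks_multiply]
    simp [Matrix.mul_nonsing_inv _ hA, Matrix.mul_nonsing_inv _ hB, Matrix.fromBlocks_one])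

lemma sigmaC_inl {V₁ V₂ : Type*} [Fintype V₁] [DecidableEq V₁] [Fintype V₂] [DecidableEq V₂]
    (M₁ : V₁ → V₁ → ℤ) (M₂ : V₂ → V₂ → ℤ) (hneg₁ : NegDef M₁) (hneg₂ : NegDef M₂)
    (e₁ : V₁ → ℤ) (e₂ : V₂ → ℤ) (v : V₁) :
    sigmaC (Msum M₁ M₂) (Sum.elim e₁ e₂) (Sum.inl v) = sigmaC M₁ e₁ v := by
  unfold sigmaC
  rw [Msum_block, block_inv _ _ (negdef_isUnit_det M₁ hneg₁) (negdef_isUnit_det M₂ hneg₂)]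
  rw [Fintype.sum_sum_type]
  simp [Matrix.fromBlocks_apply₁₁, Matrix.fromBlocks_apply₁₂]

lemma sigmaC_inr {V₁ V₂ : Type*} [Fintype V₁] [DecidableEq V₁] [Fintype V₂] [DecidableEq V₂]
    (M₁ : V₁ → V₁ → ℤ) (M₂ : V₂ → V₂ → ℤ) (hneg₁ : NegDef M₁) (hneg₂ : NegDef M₂)
    (e₁ : V₁ → ℤ) (e₂ : V₂ → ℤ) (v : V₂) :
    sigmaC (Msum M₁ M₂) (Sum.elim e₁ e₂) (Sum.inr v) = sigmaC M₂ e₂ v := by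
  unfold sigmaC
  rw [Msum_block, block_inv _ _ (negdef_isUnit_det M₁ hneg₁) (negdef_isUnit_det M₂ hneg₂)]
  rw [Fintype.sum_sum_type]
  simp [Matrix.fromBlocks_apply₂₁, Matrix.fromBlocks_apply₂₂]

end myaux2


/-- additivity of the Alexander grading under connected sum:
`A_#([K₁⊕K₂, E₁ ∪ E₂]) = A₁([K₁,E₁]) + A₂([K₂,E₂])`. -/
theorem stmt12 {V₁ V₂ : Type*} [Fintype V₁] [DecidableEq V₁] [Fintype V₂] [DecidableEq V₂]
    (M₁ : V₁ → V₁ → ℤ) (M₂ : V₂ → V₂ → ℤ)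
    (hsym₁ : ∀ v w, M₁ v w = M₁ w v) (hsym₂ : ∀ v w, M₂ v w = M₂ w v)
    (hoff₁ : ∀ v w, v ≠ w → M₁ v w = 0 ∨ M₁ v w = 1)
    (hoff₂ : ∀ v w, v ≠ w → M₂ v w = 0 ∨ M₂ v w = 1)
    (hneg₁ : NegDef M₁) (hneg₂ : NegDef M₂)
    (e₁ : V₁ → ℤ) (he₁ : ∀ v, e₁ v = 0 ∨ e₁ v = 1)
    (e₂ : V₂ → ℤ) (he₂ : ∀ v, e₂ v = 0 ∨ e₂ v = 1)
    (K₁ : V₁ → ℤ) (hK₁ : IsChar M₁ K₁) (K₂ : V₂ → ℤ) (hK₂ : IsChar M₂ K₂)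
    (E₁ : Finset V₁) (E₂ : Finset V₂) :
    Alex (Msum M₁ M₂) (Sum.elim e₁ e₂) (Sum.elim K₁ K₂) (E₁.disjSum E₂)
      = Alex M₁ e₁ K₁ E₁ + Alex M₂ e₂ K₂ E₂ := by
  classical
  have hKe₁ : IsChar M₁ (fun w => K₁ w + 2 * e₁ w) := by
    intro v
    have h := hK₁ v
    unfold Int.ModEq at h ⊢
    show (K₁ v + 2 * e₁ v) % 2 = M₁ v v % 2
    omega
  have hKe₂ : IsChar M₂ (fun w => K₂ w + 2 * e₂ w) := by
    intro v
    have h := hK₂ v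
    unfold Int.ModEq at h ⊢
    show (K₂ v + 2 * e₂ v) % 2 = M₂ v v % 2
    omega
  have hg : latG (Msum M₁ M₂) (Sum.elim K₁ K₂) (E₁.disjSum E₂)
      = latG M₁ K₁ E₁ + latG M₂ K₂ E₂ :=
    latG_disjSum M₁ M₂ hsym₁ hsym₂ K₁ hK₁ K₂ hK₂ E₁ E₂
  have hfun : (fun w => Sum.elim K₁ K₂ w + 2 * Sum.elim e₁ e₂ w)
      = Sum.elim (fun w => K₁ w + 2 * e₁ w) (fun w => K₂ w + 2 * e₂ w) := by
    funext w; cases w <;> rfl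
  have hg' : latG (Msum M₁ M₂) (fun w => Sum.elim K₁ K₂ w + 2 * Sum.elim e₁ e₂ w)
        (E₁.disjSum E₂)
      = latG M₁ (fun w => K₁ w + 2 * e₁ w) E₁ + latG M₂ (fun w => K₂ w + 2 * e₂ w) E₂ := by
    rw [hfun]
    exact latG_disjSum M₁ M₂ hsym₁ hsym₂ _ hKe₁ _ hKe₂ E₁ E₂
  have hσ1 : ∀ v, sigmaC (Msum M₁ M₂) (Sum.elim e₁ e₂) (Sum.inl v) = sigmaC M₁ e₁ v :=
    sigmaC_inl M₁ M₂ hneg₁ hneg₂ e₁ e₂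
  have hσ2 : ∀ v, sigmaC (Msum M₁ M₂) (Sum.elim e₁ e₂) (Sum.inr v) = sigmaC M₂ e₂ v :=
    sigmaC_inr M₁ M₂ hneg₁ hneg₂ e₁ e₂
  unfold Alex AlexAt
  simp only [Fintype.sum_option, Fintype.sum_sum_type, LextV, sigmaV, Mext, Msum,
    Sum.elim_inl, Sum.elim_inr, hσ1, hσ2, hg, hg', Int.cast_zero, Int.cast_add,
    Int.cast_mul, Int.cast_ofNat, Int.cast_neg, zero_mul, mul_zero, mul_one, one_mul,
    Finset.sum_const_zero, neg_zero, zero_add, add_zero, Int.cast_sub]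
  push_cast
  ring
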